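/- (Extrapolation of Carleson measures, dyadic version.) Let μ : 𝐏⁺ → [0,∞) satisfy ‖μ‖_{size*(𝐏⁺)} < ∞ and let δ > 0. Let μ′ : 𝐏⁺ → [0,∞) satisfy the weak Carleson condition μ′(P) ≤ C₁|I_P| for all P ∈ 𝐏⁺, and suppose ‖μ′‖_{size(T)} ≤ C₂ for every convex tree T with ‖μ‖_{size*(T)} ≤ δ. Then ‖μ′‖_{size*(𝐏⁺)} ≤ C(‖μ‖_{size*(𝐏⁺)}, δ)·(C₁ + C₂), where the constant C depends only on ‖μ‖_{size*(𝐏⁺)} and δ. -/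

import Mathlib

open MeasureTheory Set

noncomputable section

namespace Dyadic

/-- A dyadic interval/lacunary tile: `I = [j·2^k, (j+1)·2^k)` with `-M ≤ k ≤ M`,
`I ⊆ [0, 2^M)`.  Lacunary tiles are in bijection with dyadic intervals, so we
identify the tile `P⁺(I) = I × [1/|I|, 2/|I|)` with the data of `I`. -/
structure Tile (M : ℕ) where
  j : ℤ
  k : ℤ
  hk_lb : -(M : ℤ) ≤ k
  hk_ub : k ≤ (M : ℤ)
  hj : 0 ≤ j
  hsub : ((j : ℝ) + 1) * 2 ^ k ≤ 2 ^ (M : ℤ)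

variable {M : ℕ}

/-- The side length `|I_P| = 2^k` of the spatial interval of the tile. -/
def Tile.len (P : Tile M) : ℝ := 2 ^ P.k

/-- The spatial interval `I_P` of the tile. -/
def Tile.ival (P : Tile M) : Set ℝ :=
  Ico ((P.j : ℝ) * 2 ^ P.k) (((P.j : ℝ) + 1) * 2 ^ P.k)

/-- The order `P ≤′ Q` on lacunary tiles: `I_P ⊆ I_Q`. -/
def Tile.le (P Q : Tile M) : Prop := P.ival ⊆ Q.ival

/-- A (lacunary) tree: a collection of tiles together with a top tile. -/
structure Tree (M : ℕ) where
  tiles : Set (Tile M)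
  top : Tile M
  top_mem : top ∈ tiles
  le_top : ∀ P ∈ tiles, P.le top

/-- `|I_T|`, the length of the spatial interval of the top of the tree. -/
def Tree.len (T : Tree M) : ℝ := T.top.len

/-- A collection of tiles is convex if `P₁ ≤′ P ≤′ P₂` with `P₁, P₂` in the
collection implies `P` is in the collection. -/
def IsConvex (PP : Set (Tile M)) : Prop :=
  ∀ P₁ ∈ PP, ∀ P₂ ∈ PP, ∀ P : Tile M, P₁.le P → P.le P₂ → P ∈ PP

/-- The size `‖a‖_{size(T)} = (1/|I_T|) Σ_{P ∈ T} a(P)` of `a` on a tree `T`. -/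
def treeSize (a : Tile M → ℝ) (T : Tree M) : ℝ :=
  (∑ᶠ P ∈ T.tiles, a P) / T.len

/-- The maximal size `‖a‖_{size*(PP)}`: the supremum of `‖a‖_{size(T)}` over all
convex trees `T ⊆ PP` (by convention `0` if there are none). -/
def maxSize (a : Tile M → ℝ) (PP : Set (Tile M)) : ℝ :=
  sSup (insert 0 {s : ℝ | ∃ T : Tree M, T.tiles ⊆ PP ∧ IsConvex T.tiles ∧ s = treeSize a T})

/-- The complete tree `Tree(P) = {Q : Q ≤′ P}`. -/
def cTree (P : Tile M) : Set (Tile M) := {Q : Tile M | Q.le P}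

/-- A tree `T` is complete with respect to `PP` if `T = Tree(P_T) ∩ PP`. -/
def Tree.IsCompleteIn (T : Tree M) (PP : Set (Tile M)) : Prop :=
  T.tiles = cTree T.top ∩ PP

/-- `QQ` is an `α`-packing of the tree `T`: `QQ ⊆ T` and `Σ_{P ∈ QQ} |I_P| ≤ α|I_T|`. -/
def IsPacking (α : ℝ) (QQ : Set (Tile M)) (T : Tree M) : Prop :=
  QQ ⊆ T.tiles ∧ (∑ᶠ P ∈ QQ, Tile.len P) ≤ α * T.len

/-- `QQ` is a uniform `α`-packing of the tree `T`:
`Σ_{P ∈ QQ, I_P ⊆ J} |I_P| ≤ α|J|` for every dyadic interval `J`. -/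
def IsUniformPacking (α : ℝ) (QQ : Set (Tile M)) (T : Tree M) : Prop :=
  QQ ⊆ T.tiles ∧
    ∀ J : Tile M, (∑ᶠ P ∈ {P ∈ QQ | P.ival ⊆ J.ival}, Tile.len P) ≤ α * J.len

/-- Left half of the spatial interval. -/
def Tile.left (P : Tile M) : Set ℝ :=
  Ico ((P.j : ℝ) * 2 ^ P.k) (((P.j : ℝ) + 1 / 2) * 2 ^ P.k)

/-- Right half of the spatial interval. -/
def Tile.right (P : Tile M) : Set ℝ :=
  Ico (((P.j : ℝ) + 1 / 2) * 2 ^ P.k) (((P.j : ℝ) + 1) * 2 ^ P.k)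

/-- The (mother) Haar wavelet `φ_P = |I_P|^{-1/2}(χ_{I_l} - χ_{I_r})`. -/
def Tile.haar (P : Tile M) : ℝ → ℝ := fun x =>
  (Real.sqrt P.len)⁻¹ * (P.left.indicator 1 x - P.right.indicator 1 x)

/-- The Haar (wavelet) coefficient `Wf(P) = ⟨f, φ_P⟩`. -/
def waveCoeff (f : ℝ → ℝ) (P : Tile M) : ℝ := ∫ x, f x * P.haar x

/-- The average `[f]_{I_P} = (1/|I_P|)∫_{I_P} f`. -/
def tileAvg (f : ℝ → ℝ) (P : Tile M) : ℝ := (∫ x in P.ival, f x) / P.len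

/-- The mean `‖f‖_{mean(P)} = (1/|I_P|)∫_{I_P} |f|`. -/
def tileMean (f : ℝ → ℝ) (P : Tile M) : ℝ := (∫ x in P.ival, |f x|) / P.len

/-- The maximal mean `‖f‖_{mean*(PP)} = sup_{P ∈ PP} ‖f‖_{mean(P)}`. -/
def maxMean (f : ℝ → ℝ) (PP : Set (Tile M)) : ℝ :=
  sSup (insert 0 (tileMean f '' PP))

/-- The dyadic BMO norm `‖f‖_{BMO} = ‖|Wf|²‖_{size*(PP⁺)}^{1/2}`. -/
def bmoNorm (M : ℕ) (f : ℝ → ℝ) : ℝ :=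
  Real.sqrt (maxSize (fun P : Tile M => waveCoeff f P ^ 2) univ)

/-- The grid interval `[j·2^{-M}, (j+1)·2^{-M})` at the finest scale. -/
def gridIval (M : ℕ) (j : ℤ) : Set ℝ :=
  Ico ((j : ℝ) * 2 ^ (-(M : ℤ))) (((j : ℝ) + 1) * 2 ^ (-(M : ℤ)))

/-- A dyadic test function: supported on `[0, 2^M)` and constant on every dyadic
interval of length `2^{-M}`. -/
def IsTestFun (M : ℕ) (f : ℝ → ℝ) : Prop :=
  (∀ x : ℝ, x ∉ Ico (0 : ℝ) (2 ^ (M : ℤ)) → f x = 0) ∧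
    ∀ j : ℤ, ∀ x ∈ gridIval M j, ∀ y ∈ gridIval M j, f x = f y

/-- The `L²` norm. -/
def l2Norm (f : ℝ → ℝ) : ℝ := Real.sqrt (∫ x, f x ^ 2)

/-- The `L^∞` norm (as a supremum of values; adequate for test functions). -/
def supNorm (f : ℝ → ℝ) : ℝ := ⨆ x : ℝ, |f x|

/-- The weak `L^r` quasinorm `sup_{λ>0} λ |{|h| ≥ λ}|^{1/r}`. -/
def weakNorm (r : ℝ) (h : ℝ → ℝ) : ℝ :=
  sSup {s : ℝ | ∃ l : ℝ, 0 < l ∧ s = l * (volume {x : ℝ | l ≤ |h x|}).toReal ^ (1 / r)}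

/-- The phase space projection `Π_T f = Σ_{P ∈ T} ⟨f, φ_P⟩ φ_P` onto a tree. -/
def treeProj (T : Tree M) (f : ℝ → ℝ) : ℝ → ℝ := fun x =>
  ∑ᶠ P ∈ T.tiles, waveCoeff f P * P.haar x

/-- The high-low paraproduct `π_hl(f,g) = Σ_P Wf(P) [g]_P φ_P`. -/
def paraHL (M : ℕ) (f g : ℝ → ℝ) : ℝ → ℝ := fun x =>
  ∑ᶠ P : Tile M, waveCoeff f P * tileAvg g P * P.haar x

/-- The low-high paraproduct `π_lh(f,g) = Σ_P [f]_P Wg(P) φ_P`. -/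
def paraLH (M : ℕ) (f g : ℝ → ℝ) : ℝ → ℝ := fun x =>
  ∑ᶠ P : Tile M, tileAvg f P * waveCoeff g P * P.haar x

/-- The high-high paraproduct `π_hh(f,g) = Σ_P Wf(P) Wg(P) χ_{I_P}/|I_P|`. -/
def paraHH (M : ℕ) (f g : ℝ → ℝ) : ℝ → ℝ := fun x =>
  ∑ᶠ P : Tile M, waveCoeff f P * waveCoeff g P * P.ival.indicator 1 x / P.len

/-- The constant function `1` on `[0, 2^M)`. -/
def oneFn (M : ℕ) : ℝ → ℝ := (Ico (0 : ℝ) (2 ^ (M : ℤ))).indicator 1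

/-- A perfect dyadic Calderón–Zygmund operator, recorded via its kernel `K` and
kernel constant `A₀`. -/
structure PDCZ (M : ℕ) where
  K : ℝ → ℝ → ℝ
  A₀ : ℝ
  hA₀ : 0 < A₀
  meas : Measurable (Function.uncurry K)
  bound : ∀ x y : ℝ, x ≠ y → |K x y| ≤ A₀ / |x - y|
  perfectX : ∀ I J : Tile M, Disjoint I.ival J.ival →
    ∀ x ∈ I.ival, ∀ x' ∈ I.ival, ∀ y ∈ J.ival, K x y = K x' y
  perfectY : ∀ I J : Tile M, Disjoint I.ival J.ival →
    ∀ x ∈ I.ival, ∀ x' ∈ I.ival, ∀ y ∈ J.ival, K y x = K y x'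
  diag : ∀ I : Tile M, I.k = -(M : ℤ) → ∀ x ∈ I.ival, ∀ y ∈ I.ival, K x y = 0
  corner₁ : ∀ x ∈ Ico (0 : ℝ) (2 ^ ((M : ℤ) - 1)),
    ∀ y ∈ Ico ((2 : ℝ) ^ ((M : ℤ) - 1)) (2 ^ (M : ℤ)), K x y = 0
  corner₂ : ∀ x ∈ Ico ((2 : ℝ) ^ ((M : ℤ) - 1)) (2 ^ (M : ℤ)),
    ∀ y ∈ Ico (0 : ℝ) (2 ^ ((M : ℤ) - 1)), K x y = 0

/-- `Tf(x) = ∫ K(x,y) f(y) dy`. -/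
def PDCZ.app (Op : PDCZ M) (f : ℝ → ℝ) : ℝ → ℝ := fun x => ∫ y, Op.K x y * f y

/-- The transpose `T*f(x) = ∫ K(y,x) f(y) dy`. -/
def PDCZ.appT (Op : PDCZ M) (f : ℝ → ℝ) : ℝ → ℝ := fun x => ∫ y, Op.K y x * f y

/-- Complex-valued Haar coefficient. -/
def waveCoeffC (b : ℝ → ℂ) (P : Tile M) : ℂ := ∫ x, b x * (P.haar x : ℂ)

/-- Complex-valued average. -/
def tileAvgC (b : ℝ → ℂ) (P : Tile M) : ℂ := (∫ x in P.ival, b x) / (P.len : ℂ)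

/-- BMO norm of a complex-valued function. -/
def bmoNormC (M : ℕ) (b : ℝ → ℂ) : ℝ :=
  Real.sqrt (maxSize (fun P : Tile M => ‖waveCoeffC b P‖ ^ 2) univ)

/-- Complex-valued dyadic test functions. -/
def IsTestFunC (M : ℕ) (b : ℝ → ℂ) : Prop :=
  (∀ x : ℝ, x ∉ Ico (0 : ℝ) (2 ^ (M : ℤ)) → b x = 0) ∧
    ∀ j : ℤ, ∀ x ∈ gridIval M j, ∀ y ∈ gridIval M j, b x = b y

/-- The operator applied to a complex-valued function. -/
def PDCZ.appC (Op : PDCZ M) (b : ℝ → ℂ) : ℝ → ℂ := fun x => ∫ y, (Op.K x y : ℂ) * b y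


section AuxLemmas

variable {M : ℕ}

theorem Tile.len_pos (P : Tile M) : 0 < P.len := zpow_pos two_pos _

theorem Tile.left_mem_ival (P : Tile M) : ((P.j : ℝ) * 2 ^ P.k) ∈ P.ival := by
  refine ⟨le_refl _, ?_⟩
  have : (0:ℝ) < 2 ^ P.k := P.len_pos
  nlinarith

theorem Tile.eq_of_ival_eq {P Q : Tile M} (h : P.ival = Q.ival) : P = Q := by
  have hPlt : (P.j : ℝ) * 2 ^ P.k < ((P.j : ℝ) + 1) * 2 ^ P.k := by
    have : (0:ℝ) < 2 ^ P.k := P.len_pos; nlinarith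
  rw [Tile.ival, Tile.ival, Set.Ico_eq_Ico_iff (Or.inl hPlt)] at h
  obtain ⟨h1, h2⟩ := h
  have hk : (2 : ℝ) ^ P.k = 2 ^ Q.k := by linarith
  have hkk : P.k = Q.k := zpow_right_injective₀ two_pos (by norm_num) hk
  have hj : P.j = Q.j := by
    have h2k : (0 : ℝ) < 2 ^ Q.k := Q.len_pos
    rw [hkk] at h1
    exact_mod_cast mul_right_cancel₀ h2k.ne' h1
  rcases P with ⟨pj, pk, _, _, _, _⟩; rcases Q with ⟨qj, qk, _, _, _, _⟩
  simp only at hj hkk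
  subst hj; subst hkk; rfl

theorem Tile.le_rfl (P : Tile M) : P.le P := subset_rfl

theorem Tile.le_trans {P Q R : Tile M} (h : P.le Q) (h' : Q.le R) : P.le R :=
  Set.Subset.trans h h'

theorem Tile.le_antisymm {P Q : Tile M} (h : P.le Q) (h' : Q.le P) : P = Q :=
  Tile.eq_of_ival_eq (Set.Subset.antisymm h h')

/-- Dyadic dichotomy: tiles whose intervals share a point are nested. -/
theorem Tile.nested {P Q : Tile M} {x : ℝ} (hx : x ∈ P.ival) (hy : x ∈ Q.ival) :
    P.le Q ∨ Q.le P := by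
  have key : ∀ P Q : Tile M, P.k ≤ Q.k → x ∈ P.ival → x ∈ Q.ival → P.le Q := by
    intro P Q hk hx hy
    obtain ⟨hx1, hx2⟩ := hx
    obtain ⟨hy1, hy2⟩ := hy
    set d : ℕ := (Q.k - P.k).toNat with hd
    have hdk : Q.k = P.k + d := by
      rw [hd, Int.toNat_of_nonneg (by omega)]; ring
    have h2d : (2 : ℝ) ^ Q.k = 2 ^ P.k * 2 ^ d := by
      rw [hdk, zpow_add₀ (by norm_num : (2:ℝ) ≠ 0), zpow_natCast]
    have h2kpos : (0 : ℝ) < 2 ^ P.k := P.len_pos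
    have h2dpos : (0 : ℝ) < 2 ^ d := by positivity
    have hint1 : Q.j * (2 : ℤ) ^ d ≤ P.j := by
      have hr : (Q.j : ℝ) * 2 ^ d < (P.j : ℝ) + 1 := by
        have h := lt_of_le_of_lt hy1 hx2
        rw [h2d] at h; nlinarith
      have : (Q.j * (2:ℤ) ^ d : ℤ) < P.j + 1 := by exact_mod_cast (by push_cast; linarith : ((Q.j * (2:ℤ) ^ d : ℤ) : ℝ) < ((P.j + 1 : ℤ) : ℝ))
      omega
    have hint2 : P.j + 1 ≤ (Q.j + 1) * (2 : ℤ) ^ d := by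
      have hr : (P.j : ℝ) < ((Q.j : ℝ) + 1) * 2 ^ d := by
        have h := lt_of_le_of_lt hx1 hy2
        rw [h2d] at h; nlinarith
      have : (P.j : ℤ) < (Q.j + 1) * (2:ℤ) ^ d := by exact_mod_cast (by push_cast; linarith : ((P.j : ℤ) : ℝ) < (((Q.j + 1) * (2:ℤ) ^ d : ℤ) : ℝ))
      omega
    have hr1 : ((Q.j * (2:ℤ) ^ d : ℤ) : ℝ) ≤ (P.j : ℝ) := by exact_mod_cast hint1
    have hr2 : ((P.j : ℝ) + 1) ≤ (((Q.j + 1) * (2:ℤ) ^ d : ℤ) : ℝ) := by exact_mod_cast hint2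
    push_cast at hr1 hr2
    apply Set.Ico_subset_Ico
    · rw [h2d]; nlinarith
    · rw [h2d]; nlinarith
  rcases le_total P.k Q.k with h | h
  · exact Or.inl (key P Q h hx hy)
  · exact Or.inr (key Q P h hy hx)

theorem Tile.mem_box (P : Tile M) :
    (P.j, P.k) ∈ Set.Icc ((0:ℤ), -(M:ℤ)) ((2 ^ (2 * M) : ℤ), (M:ℤ)) := by
  simp only [Set.mem_Icc, Prod.le_def]
  refine ⟨⟨P.hj, P.hk_lb⟩, ⟨?_, P.hk_ub⟩⟩
  have h1 : ((P.j : ℝ) + 1) * 2 ^ P.k ≤ 2 ^ (M : ℤ) := P.hsub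
  have h2 : (0:ℝ) < 2 ^ P.k := P.len_pos
  have h3 : (P.j : ℝ) < 2 ^ ((M : ℤ) - P.k) := by
    rw [zpow_sub₀ (by norm_num : (2:ℝ) ≠ 0), lt_div_iff₀ h2]
    nlinarith
  have h4 : ((M : ℤ) - P.k) ≤ (2 * M : ℕ) := by have := P.hk_lb; push_cast; omega
  have h5 : (2:ℝ) ^ ((M : ℤ) - P.k) ≤ 2 ^ ((2 * M : ℕ) : ℤ) :=
    zpow_le_zpow_right₀ (by norm_num) h4
  have h6 : (P.j : ℝ) < ((2 ^ (2 * M) : ℤ) : ℝ) := by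
    push_cast
    calc (P.j : ℝ) < 2 ^ ((M : ℤ) - P.k) := h3
      _ ≤ 2 ^ ((2 * M : ℕ) : ℤ) := h5
      _ = 2 ^ (2 * M : ℕ) := by rw [zpow_natCast]
  have h7 : P.j < 2 ^ (2 * M) := by exact_mod_cast h6
  omega

instance : Finite (Tile M) := by
  haveI : Finite (↥(Set.Icc ((0:ℤ), -(M:ℤ)) ((2 ^ (2 * M) : ℤ), (M:ℤ)))) :=
    (Set.finite_Icc _ _).to_subtype
  refine Finite.of_injective
    (fun P : Tile M => (⟨(P.j, P.k), P.mem_box⟩ :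
      ↥(Set.Icc ((0:ℤ), -(M:ℤ)) ((2 ^ (2 * M) : ℤ), (M:ℤ))))) ?_
  intro P Q h
  simp only [Subtype.mk.injEq, Prod.mk.injEq] at h
  obtain ⟨h1, h2⟩ := h
  rcases P with ⟨pj, pk, _, _, _, _⟩; rcases Q with ⟨qj, qk, _, _, _, _⟩
  simp only at h1 h2
  subst h1; subst h2; rfl

instance : Finite (Tree M) := by
  refine Finite.of_injective (fun T : Tree M => (T.tiles, T.top)) ?_
  intro T T' h
  simp only [Prod.mk.injEq] at h
  obtain ⟨h1, h2⟩ := h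
  rcases T with ⟨t1, t2, _, _⟩; rcases T' with ⟨t1', t2', _, _⟩
  simp only at h1 h2
  subst h1; subst h2; rfl

theorem Tile.measurableSet_ival (P : Tile M) : MeasurableSet P.ival :=
  measurableSet_Ico

theorem Tile.volume_ival (P : Tile M) : volume P.ival = ENNReal.ofReal P.len := by
  rw [Tile.ival, Real.volume_Ico, Tile.len]
  congr 1; ring

/-- Key integration lemma: comparison of weighted sums of lengths from a pointwise
comparison of weighted sums of indicators. -/
theorem sum_len_le (s t : Finset (Tile M)) (c d : Tile M → ℝ)
    (h : ∀ x : ℝ, ∑ Q ∈ s, c Q * Q.ival.indicator 1 x ≤ ∑ P ∈ t, d P * P.ival.indicator 1 x) :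
    ∑ Q ∈ s, c Q * Q.len ≤ ∑ P ∈ t, d P * P.len := by
  have heq : ∀ (Q : Tile M) (e : ℝ), (fun x => e * Q.ival.indicator 1 x)
      = Q.ival.indicator (fun _ => e) := by
    intro Q e; funext x
    by_cases hx : x ∈ Q.ival <;> simp [Set.indicator_of_mem, Set.indicator_of_notMem, hx]
  have hint : ∀ (Q : Tile M) (e : ℝ), Integrable (fun x => e * Q.ival.indicator 1 x) := by
    intro Q e
    rw [heq]
    refine MeasureTheory.IntegrableOn.integrable_indicator ?_ Q.measurableSet_ival
    exact MeasureTheory.integrableOn_const (by rw [Tile.volume_ival]; exact ENNReal.ofReal_ne_top)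
  have hval : ∀ (Q : Tile M) (e : ℝ), ∫ x, e * Q.ival.indicator 1 x = e * Q.len := by
    intro Q e
    calc ∫ x, e * Q.ival.indicator 1 x
        = ∫ x, Q.ival.indicator (fun _ => e) x := congrArg (integral volume) (heq Q e)
      _ = (volume Q.ival).toReal • e :=
          MeasureTheory.integral_indicator_const e Q.measurableSet_ival
      _ = e * Q.len := by
          rw [Tile.volume_ival, ENNReal.toReal_ofReal Q.len_pos.le, smul_eq_mul, _root_.mul_comm]
  have hsum : ∀ (u : Finset (Tile M)) (e : Tile M → ℝ),
      ∫ x, ∑ Q ∈ u, e Q * Q.ival.indicator 1 x = ∑ Q ∈ u, e Q * Q.len := by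
    intro u e
    rw [MeasureTheory.integral_finset_sum _ (fun Q _ => hint Q (e Q))]
    exact Finset.sum_congr rfl fun Q _ => hval Q (e Q)
  calc ∑ Q ∈ s, c Q * Q.len = ∫ x, ∑ Q ∈ s, c Q * Q.ival.indicator 1 x := (hsum s c).symm
    _ ≤ ∫ x, ∑ P ∈ t, d P * P.ival.indicator 1 x := by
        refine MeasureTheory.integral_mono ?_ ?_ h
        · exact MeasureTheory.integrable_finset_sum _ (fun Q _ => hint Q (c Q))
        · exact MeasureTheory.integrable_finset_sum _ (fun P _ => hint P (d P))
    _ = ∑ P ∈ t, d P * P.len := hsum t d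

end AuxLemmas

/-- Corollary 4.7: extrapolation of Carleson measures. -/
theorem statement5 (B δ : ℝ) (hB : 0 ≤ B) (hδ : 0 < δ) :
    ∃ C : ℝ, 0 < C ∧
      ∀ (M : ℕ) (μ μ' : Tile M → ℝ) (C₁ C₂ : ℝ),
        0 ≤ C₁ → 0 ≤ C₂ →
        (∀ P, 0 ≤ μ P) → (∀ P, 0 ≤ μ' P) →
        maxSize μ (univ : Set (Tile M)) ≤ B →
        (∀ P : Tile M, μ' P ≤ C₁ * P.len) →
        (∀ T : Tree M, IsConvex T.tiles → maxSize μ T.tiles ≤ δ → treeSize μ' T ≤ C₂) →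
        maxSize μ' (univ : Set (Tile M)) ≤ C * (C₁ + C₂) := by
  classical
  refine ⟨1 + 2 * B / δ, by positivity, ?_⟩
  intro M μ μ' C₁ C₂ hC₁ hC₂ hμ hμ' hBsize hwk hloc
  haveI : Fintype (Tile M) := Fintype.ofFinite _
  set w : ℝ := δ / 2 with hw
  have hw0 : 0 < w := by rw [hw]; positivity
  have hCok : 0 ≤ (1 + 2 * B / δ) * (C₁ + C₂) := by positivity
  rw [maxSize]
  refine Real.sSup_le ?_ hCok
  rintro s hs
  rcases Set.mem_insert_iff.1 hs with rfl | ⟨T, -, hconv, rfl⟩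
  · exact hCok
  -- Notation
  have hfin : ∀ (ν : Tile M → ℝ) (S : Set (Tile M)),
      ∑ᶠ P ∈ S, ν P = ∑ P ∈ S.toFinset, ν P := by
    intro ν S
    rw [← finsum_mem_coe_finset, Set.coe_toFinset]
  set TF : Finset (Tile M) := T.tiles.toFinset with hTF
  have hmemTF : ∀ {P : Tile M}, P ∈ TF ↔ P ∈ T.tiles := fun {P} => Set.mem_toFinset
  have hRTF : T.top ∈ TF := hmemTF.2 T.top_mem
  have hleR : ∀ P ∈ TF, P.le T.top := fun P hP => T.le_top P (hmemTF.1 hP)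
  -- the vertical partial sums
  set G : Tile M → ℝ := fun P => ∑ P' ∈ TF.filter (fun P' => P.le P'), μ P' / P'.len with hG
  have hG0 : ∀ P, 0 ≤ G P := fun P =>
    Finset.sum_nonneg fun P' _ => div_nonneg (hμ P') P'.len_pos.le
  have hGmono : ∀ P P' : Tile M, P.le P' → G P' ≤ G P := by
    intro P P' hle
    refine Finset.sum_le_sum_of_subset_of_nonneg ?_
      (fun P'' _ _ => div_nonneg (hμ P'') P''.len_pos.le)
    intro P'' hP''
    obtain ⟨h1, h2⟩ := Finset.mem_filter.1 hP''
    exact Finset.mem_filter.2 ⟨h1, Tile.le_trans hle h2⟩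
  set binOf : Tile M → ℕ := fun P => ⌊G P / w⌋₊ with hbinOf
  have hbin_le : ∀ P, (binOf P : ℝ) * w ≤ G P := by
    intro P
    have := Nat.floor_le (div_nonneg (hG0 P) hw0.le)
    calc (binOf P : ℝ) * w ≤ (G P / w) * w := by nlinarith
      _ = G P := div_mul_cancel₀ _ hw0.ne'
  have hbin_lt : ∀ P, G P < ((binOf P : ℝ) + 1) * w := by
    intro P
    have h := Nat.lt_floor_add_one (G P / w)
    have := (div_lt_iff₀ hw0).1 h
    calc G P < (↑⌊G P / w⌋₊ + 1) * w := this
      _ = ((binOf P : ℝ) + 1) * w := rfl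
  have hbin_eq : ∀ (P : Tile M) (n : ℕ), (n : ℝ) * w ≤ G P → G P < ((n : ℝ) + 1) * w →
      binOf P = n := by
    intro P n h1 h2
    simp only [hbinOf]
    rw [Nat.floor_eq_iff (div_nonneg (hG0 P) hw0.le)]
    constructor
    · rw [le_div_iff₀ hw0]; linarith
    · rw [div_lt_iff₀ hw0]; push_cast; linarith
  have hbinmono : ∀ P P' : Tile M, P.le P' → binOf P' ≤ binOf P := by
    intro P P' hle
    exact Nat.floor_mono (by gcongr; exact hGmono P P' hle)
  -- total mass bound
  have hTsum : ∑ P ∈ TF, μ P ≤ B * T.top.len := by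
    have h1 : treeSize μ T ≤ maxSize μ univ := by
      rw [maxSize]
      refine le_csSup ?_ (Set.mem_insert_of_mem _ ⟨T, Set.subset_univ _, hconv, rfl⟩)
      refine Set.Finite.bddAbove (Set.Finite.insert _ ?_)
      refine Set.Finite.subset (Set.finite_range (treeSize μ)) ?_
      rintro s ⟨T', -, -, rfl⟩; exact ⟨T', rfl⟩
    have h2 := h1.trans hBsize
    rw [treeSize, Tree.len, hfin] at h2
    have h3 := (div_le_iff₀ T.top.len_pos).1 h2
    linarith
  -- light tiles and tops
  set lightF : Finset (Tile M) := TF.filter (fun P => μ P ≤ w * P.len) with hlightF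
  set TopsF : Finset (Tile M) :=
    lightF.filter (fun Q => ∀ Q' ∈ lightF, Q.le Q' → binOf Q' = binOf Q → Q = Q') with hTopsF
  have hTopslight : TopsF ⊆ lightF := Finset.filter_subset _ _
  have hlightTF : lightF ⊆ TF := Finset.filter_subset _ _
  have hcover : ∀ P ∈ lightF, ∃ Q ∈ TopsF, P.le Q ∧ binOf Q = binOf P := by
    intro P hP
    set U : Set (Tile M) := {Q | Q ∈ lightF ∧ P.le Q ∧ binOf Q = binOf P} with hU
    obtain ⟨Q, hQU, hQmax⟩ := Set.Finite.exists_maximalFor Tile.ival U (Set.toFinite U)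
      ⟨P, hP, P.le_rfl, rfl⟩
    refine ⟨Q, ?_, hQU.2.1, hQU.2.2⟩
    rw [hTopsF, Finset.mem_filter]
    refine ⟨hQU.1, ?_⟩
    intro Q' hQ' hle hbin'
    apply Tile.eq_of_ival_eq
    exact Set.Subset.antisymm hle (hQmax ⟨hQ', Tile.le_trans hQU.2.1 hle, by rw [hbin', hQU.2.2]⟩ hle)
  have hind : ∀ (sF : Finset (Tile M)) (f : Tile M → ℝ) (x : ℝ),
      ∑ P ∈ sF, f P * P.ival.indicator 1 x = ∑ P ∈ sF.filter (fun P => x ∈ P.ival), f P := by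
    intro sF f x
    rw [Finset.sum_filter]
    refine Finset.sum_congr rfl fun Q _ => ?_
    by_cases hx : x ∈ Q.ival <;>
      simp [Set.indicator_of_mem, Set.indicator_of_notMem, hx]
  -- size estimate on trees inside a single bin of light tiles
  have hsizelem : ∀ (n : ℕ) (T'' : Tree M),
      (∀ P ∈ T''.tiles, P ∈ lightF ∧ binOf P = n) →
      ∑ P ∈ T''.tiles.toFinset, μ P ≤ δ * T''.top.len := by
    intro n T'' hsub
    set TF'' : Finset (Tile M) := T''.tiles.toFinset with hTF''
    have hmem'' : ∀ {P : Tile M}, P ∈ TF'' ↔ P ∈ T''.tiles := fun {P} => Set.mem_toFinset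
    obtain ⟨hR'l, hR'bin⟩ := hsub T''.top T''.top_mem
    have hR'light : μ T''.top ≤ w * T''.top.len := (Finset.mem_filter.1 hR'l).2
    have key := sum_len_le TF'' {T''.top} (fun P => μ P / P.len) (fun _ => δ) ?_
    · have hL : ∑ Q ∈ TF'', μ Q / Q.len * Q.len = ∑ Q ∈ TF'', μ Q :=
        Finset.sum_congr rfl fun Q _ => div_mul_cancel₀ _ Q.len_pos.ne'
      rw [hL, Finset.sum_singleton] at key
      exact key
    · intro x
      rw [Finset.sum_singleton]
      have hLHS : ∑ Q ∈ TF'', μ Q / Q.len * Q.ival.indicator 1 x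
          = ∑ Q ∈ TF''.filter (fun P => x ∈ P.ival), μ Q / Q.len := by
        rw [Finset.sum_filter]
        refine Finset.sum_congr rfl fun Q _ => ?_
        by_cases hx : x ∈ Q.ival <;>
          simp [Set.indicator_of_mem, Set.indicator_of_notMem, hx]
      rw [hLHS]
      set D : Finset (Tile M) := TF''.filter (fun P => x ∈ P.ival) with hD
      rcases D.eq_empty_or_nonempty with hDe | hDne
      · rw [hDe, Finset.sum_empty]
        exact mul_nonneg hδ.le (Set.indicator_nonneg (fun _ _ => zero_le_one) x)
      · obtain ⟨P₀, hP₀D, hP₀min⟩ := Set.Finite.exists_minimalFor Tile.ival (↑D : Set (Tile M))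
          (Set.toFinite _) (by exact_mod_cast hDne)
        have hP₀D' : P₀ ∈ D := by exact_mod_cast hP₀D
        have hx0 : x ∈ P₀.ival := (Finset.mem_filter.1 hP₀D').2
        have hP₀tiles : P₀ ∈ T''.tiles := hmem''.1 (Finset.mem_filter.1 hP₀D').1
        have hP₀top : P₀.le T''.top := T''.le_top P₀ hP₀tiles
        have hxR' : x ∈ T''.top.ival := hP₀top hx0
        rw [Set.indicator_of_mem hxR']
        simp only [Pi.one_apply, _root_.mul_one]
        -- now the chain computation
        have hDsub : D ⊆ TF.filter (fun P' => P₀.le P' ∧ P'.le T''.top) := by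
          intro P hP
          obtain ⟨hPmem, hxP⟩ := Finset.mem_filter.1 hP
          have hPtiles : P ∈ T''.tiles := hmem''.1 hPmem
          refine Finset.mem_filter.2 ⟨hlightTF (hsub P hPtiles).1, ?_, T''.le_top P hPtiles⟩
          rcases Tile.nested hx0 hxP with h | h
          · exact h
          · have := hP₀min hP h
            exact this
        have hsum1 : ∑ Q ∈ D, μ Q / Q.len
            ≤ ∑ Q ∈ TF.filter (fun P' => P₀.le P' ∧ P'.le T''.top), μ Q / Q.len :=
          Finset.sum_le_sum_of_subset_of_nonneg hDsub
            (fun Q _ _ => div_nonneg (hμ Q) Q.len_pos.le)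
        -- split G P₀
        have hsplit : G P₀ = (∑ Q ∈ TF.filter (fun P' => P₀.le P' ∧ P'.le T''.top), μ Q / Q.len)
            + ∑ Q ∈ TF.filter (fun P' => T''.top.le P' ∧ P' ≠ T''.top), μ Q / Q.len := by
          simp only [hG]
          rw [← Finset.sum_filter_add_sum_filter_not (TF.filter (fun P' => P₀.le P'))
            (fun P' => P'.le T''.top)]
          congr 1
          · rw [Finset.filter_filter]
          · rw [Finset.filter_filter]
            refine Finset.sum_congr (Finset.filter_congr fun P' hP' => ?_) fun _ _ => rfl
            constructor
            · rintro ⟨h1, h2⟩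
              have hxP' : x ∈ P'.ival := h1 hx0
              rcases Tile.nested hxR' hxP' with h | h
              · refine ⟨h, fun he => h2 ?_⟩
                rw [he]; exact Tile.le_rfl _
              · exact absurd h h2
            · rintro ⟨h1, h2⟩
              refine ⟨Tile.le_trans hP₀top h1, fun hc => h2 ?_⟩
              exact Tile.le_antisymm hc h1
        -- split G (T''.top)
        have hsplit2 : G T''.top = μ T''.top / T''.top.len
            + ∑ Q ∈ TF.filter (fun P' => T''.top.le P' ∧ P' ≠ T''.top), μ Q / Q.len := by
          simp only [hG]
          have hset : TF.filter (fun P' => T''.top.le P')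
              = insert T''.top (TF.filter (fun P' => T''.top.le P' ∧ P' ≠ T''.top)) := by
            ext P'
            simp only [Finset.mem_filter, Finset.mem_insert]
            constructor
            · rintro ⟨h1, h2⟩
              by_cases he : P' = T''.top
              · exact Or.inl he
              · exact Or.inr ⟨h1, h2, he⟩
            · rintro (rfl | ⟨h1, h2, h3⟩)
              · exact ⟨hlightTF hR'l, Tile.le_rfl _⟩
              · exact ⟨h1, h2⟩
          rw [hset, Finset.sum_insert (by simp [Finset.mem_filter])]
        -- bin bounds
        have hb1 : G P₀ < ((n : ℝ) + 1) * w := by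
          have := (hsub P₀ hP₀tiles).2
          have h := hbin_lt P₀
          rw [this] at h
          exact h
        have hb2 : (n : ℝ) * w ≤ G T''.top := by
          have h := hbin_le T''.top
          rw [hR'bin] at h
          exact h
        have hb3 : μ T''.top / T''.top.len ≤ w :=
          (div_le_iff₀ T''.top.len_pos).2 (by linarith [hR'light, _root_.mul_comm w T''.top.len])
        have hδ2 : δ = 2 * w := by rw [hw]; ring
        linarith
  -- the packing bound for tops
  have htops : ∑ Q ∈ TopsF, Q.len ≤ (1 + B / w) * T.top.len := by
    have key := sum_len_le TopsF TF (fun _ => (1 : ℝ))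
      (fun P => μ P / (w * P.len) + (if P = T.top then 1 else 0)) ?_
    · have hL : ∑ Q ∈ TopsF, (1 : ℝ) * Q.len = ∑ Q ∈ TopsF, Q.len := by
        refine Finset.sum_congr rfl fun Q _ => _root_.one_mul _
      rw [hL] at key
      have hR1 : ∑ P ∈ TF, (μ P / (w * P.len) + (if P = T.top then 1 else 0)) * P.len
          = (∑ P ∈ TF, μ P) / w + T.top.len := by
        rw [Finset.sum_congr rfl (fun P _ => _root_.add_mul _ _ _), Finset.sum_add_distrib]
        congr 1
        · rw [Finset.sum_div]
          refine Finset.sum_congr rfl fun P _ => ?_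
          rw [div_mul_eq_mul_div, _root_.mul_comm (μ P) P.len, _root_.mul_comm w P.len,
            mul_div_mul_left _ _ P.len_pos.ne']
        · have : ∀ P : Tile M, (if P = T.top then (1:ℝ) else 0) * P.len
              = if P = T.top then P.len else 0 := by
            intro P; split <;> simp
          rw [Finset.sum_congr rfl (fun P _ => this P), Finset.sum_ite_eq' TF T.top
            (fun P => P.len), if_pos hRTF]
      rw [hR1] at key
      have : (∑ P ∈ TF, μ P) / w ≤ B * T.top.len / w := by gcongr
      calc ∑ Q ∈ TopsF, Q.len ≤ (∑ P ∈ TF, μ P) / w + T.top.len := key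
        _ ≤ B * T.top.len / w + T.top.len := by linarith
        _ = (1 + B / w) * T.top.len := by ring
    · intro x
      have hLHS : ∑ Q ∈ TopsF, (1 : ℝ) * Q.ival.indicator 1 x
          = ((TopsF.filter (fun P => x ∈ P.ival)).card : ℝ) := by
        rw [hind TopsF (fun _ => (1:ℝ)) x]
        rw [Finset.sum_const, nsmul_eq_mul, _root_.mul_one]
      rw [hLHS]
      have hRHS : ∑ P ∈ TF, (μ P / (w * P.len) + (if P = T.top then 1 else 0))
            * P.ival.indicator 1 x
          = ∑ P ∈ TF.filter (fun P => x ∈ P.ival),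
              (μ P / (w * P.len) + (if P = T.top then 1 else 0)) :=
        hind TF _ x
      rw [hRHS]
      set D2 : Finset (Tile M) := TopsF.filter (fun P => x ∈ P.ival) with hD2
      set DT : Finset (Tile M) := TF.filter (fun P => x ∈ P.ival) with hDT
      have hDTnonneg : ∀ P ∈ DT, (0:ℝ) ≤ μ P / (w * P.len) + (if P = T.top then 1 else 0) := by
        intro P _
        refine add_nonneg (div_nonneg (hμ P) (mul_nonneg hw0.le P.len_pos.le)) ?_
        split <;> norm_num
      rcases D2.eq_empty_or_nonempty with hDe | hDne
      · rw [hDe]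
        simp only [Finset.card_empty, Nat.cast_zero]
        exact Finset.sum_nonneg hDTnonneg
      · obtain ⟨Q₀, hQ₀D, hQ₀min⟩ := Set.Finite.exists_minimalFor Tile.ival
          (↑D2 : Set (Tile M)) (Set.toFinite _) (by exact_mod_cast hDne)
        have hQ₀D' : Q₀ ∈ D2 := by exact_mod_cast hQ₀D
        have hQ₀Tops : Q₀ ∈ TopsF := (Finset.mem_filter.1 hQ₀D').1
        have hxQ₀ : x ∈ Q₀.ival := (Finset.mem_filter.1 hQ₀D').2
        have hQ₀TF : Q₀ ∈ TF := hlightTF (hTopslight hQ₀Tops)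
        have hQ₀le : ∀ Q ∈ D2, Q₀.le Q := by
          intro Q hQ
          have hxQ : x ∈ Q.ival := (Finset.mem_filter.1 hQ).2
          rcases Tile.nested hxQ₀ hxQ with h | h
          · exact h
          · exact hQ₀min hQ h
        -- injectivity of binOf on D2
        have hinj : Set.InjOn binOf (↑D2 : Set (Tile M)) := by
          intro a ha b hb hab
          have haT : a ∈ TopsF := (Finset.mem_filter.1 (by exact_mod_cast ha : a ∈ D2)).1
          have hbT : b ∈ TopsF := (Finset.mem_filter.1 (by exact_mod_cast hb : b ∈ D2)).1
          have hxa : x ∈ a.ival := (Finset.mem_filter.1 (by exact_mod_cast ha : a ∈ D2)).2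
          have hxb : x ∈ b.ival := (Finset.mem_filter.1 (by exact_mod_cast hb : b ∈ D2)).2
          have hamax := (Finset.mem_filter.1 haT).2
          have hbmax := (Finset.mem_filter.1 hbT).2
          rcases Tile.nested hxa hxb with h | h
          · exact hamax b (hTopslight hbT) h (by rw [hab])
          · exact (hbmax a (hTopslight haT) h (by rw [hab])).symm
        have hcard : (D2.card : ℝ) ≤ (binOf Q₀ : ℝ) + 1 := by
          have h1 : D2.card = (D2.image binOf).card :=
            (Finset.card_image_of_injOn hinj).symm
          have h2 : D2.image binOf ⊆ Finset.range (binOf Q₀ + 1) := by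
            intro m hm
            obtain ⟨Q, hQ, rfl⟩ := Finset.mem_image.1 hm
            rw [Finset.mem_range, Nat.lt_succ_iff]
            exact hbinmono Q₀ Q (hQ₀le Q hQ)
          have h3 := Finset.card_le_card h2
          rw [Finset.card_range] at h3
          rw [h1]
          exact_mod_cast h3
        -- lower bound for the RHS
        have hsub2 : TF.filter (fun P' => Q₀.le P') ⊆ DT := by
          intro P' hP'
          obtain ⟨h1, h2⟩ := Finset.mem_filter.1 hP'
          exact Finset.mem_filter.2 ⟨h1, h2 hxQ₀⟩
        have hRbd : (G Q₀) / w + 1 ≤ ∑ P ∈ DT, (μ P / (w * P.len)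
            + (if P = T.top then 1 else 0)) := by
          have hsplitsum : ∑ P ∈ DT, (μ P / (w * P.len) + (if P = T.top then 1 else 0))
              = (∑ P ∈ DT, μ P / (w * P.len)) + ∑ P ∈ DT, (if P = T.top then (1:ℝ) else 0) := by
            rw [Finset.sum_add_distrib]
          have htop1 : ∑ P ∈ DT, (if P = T.top then (1:ℝ) else 0) = 1 := by
            rw [Finset.sum_ite_eq' DT T.top (fun _ => (1:ℝ))]
            rw [if_pos]
            refine Finset.mem_filter.2 ⟨hRTF, ?_⟩
            exact hleR Q₀ hQ₀TF hxQ₀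
          have hG1 : (G Q₀) / w ≤ ∑ P ∈ DT, μ P / (w * P.len) := by
            have he : ∀ P : Tile M, μ P / P.len / w = μ P / (w * P.len) := by
              intro P; rw [div_div, _root_.mul_comm]
            simp only [hG]
            rw [Finset.sum_div]
            calc ∑ P ∈ TF.filter (fun P' => Q₀.le P'), μ P / P.len / w
                = ∑ P ∈ TF.filter (fun P' => Q₀.le P'), μ P / (w * P.len) :=
                  Finset.sum_congr rfl fun P _ => he P
              _ ≤ ∑ P ∈ DT, μ P / (w * P.len) :=
                  Finset.sum_le_sum_of_subset_of_nonneg hsub2 (fun P _ _ =>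
                    div_nonneg (hμ P) (mul_nonneg hw0.le P.len_pos.le))
          rw [hsplitsum, htop1]
          linarith
        have hfloor : (binOf Q₀ : ℝ) ≤ G Q₀ / w :=
          Nat.floor_le (div_nonneg (hG0 Q₀) hw0.le)
        linarith
  -- per-top tree estimate
  have hEQ : ∀ Q ∈ TopsF,
      ∑ P ∈ lightF.filter (fun P => P.le Q ∧ binOf P = binOf Q), μ' P ≤ C₂ * Q.len := by
    intro Q hQTops
    set EQF : Finset (Tile M) := lightF.filter (fun P => P.le Q ∧ binOf P = binOf Q) with hEQF
    have hQmem : Q ∈ EQF := Finset.mem_filter.2 ⟨hTopslight hQTops, Q.le_rfl, rfl⟩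
    have hEQsub : ∀ P ∈ EQF, P ∈ lightF ∧ binOf P = binOf Q := by
      intro P hP
      obtain ⟨h1, _, h3⟩ := Finset.mem_filter.1 hP
      exact ⟨h1, h3⟩
    have hconvQ : IsConvex (↑EQF : Set (Tile M)) := by
      intro P₁ h₁ P₂ h₂ P hle₁ hle₂
      have h₁' : P₁ ∈ EQF := by exact_mod_cast h₁
      have h₂' : P₂ ∈ EQF := by exact_mod_cast h₂
      obtain ⟨h₁l, h₁Q, h₁b⟩ := Finset.mem_filter.1 h₁'
      obtain ⟨h₂l, h₂Q, h₂b⟩ := Finset.mem_filter.1 h₂'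
      have hPtiles : P ∈ T.tiles := hconv P₁ (hmemTF.1 (hlightTF h₁l)) P₂
        (hmemTF.1 (hlightTF h₂l)) P hle₁ hle₂
      have hPTF : P ∈ TF := hmemTF.2 hPtiles
      have hG12 : G P₂ ≤ G P := hGmono P P₂ hle₂
      have hG11 : G P ≤ G P₁ := hGmono P₁ P hle₁
      have hb2 : (binOf Q : ℝ) * w ≤ G P₂ := by
        have := hbin_le P₂; rw [h₂b] at this; exact this
      have hb1 : G P₁ < ((binOf Q : ℝ) + 1) * w := by
        have := hbin_lt P₁; rw [h₁b] at this; exact this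
      have hPbin : binOf P = binOf Q := hbin_eq P (binOf Q) (by linarith) (by linarith)
      have hPlight : μ P ≤ w * P.len := by
        by_cases hPP₂ : P = P₂
        · rw [hPP₂]; exact (Finset.mem_filter.1 h₂l).2
        · have hsub3 : insert P (TF.filter (fun P'' => P₂.le P''))
              ⊆ TF.filter (fun P'' => P.le P'') := by
            intro P'' hP''
            rcases Finset.mem_insert.1 hP'' with rfl | hP''
            · exact Finset.mem_filter.2 ⟨hPTF, P''.le_rfl⟩
            · obtain ⟨ha, hb'⟩ := Finset.mem_filter.1 hP''
              exact Finset.mem_filter.2 ⟨ha, Tile.le_trans hle₂ hb'⟩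
          have hnotmem : P ∉ TF.filter (fun P'' => P₂.le P'') := by
            intro hc
            exact hPP₂ (Tile.le_antisymm hle₂ (Finset.mem_filter.1 hc).2)
          have h4 : μ P / P.len + G P₂ ≤ G P := by
            simp only [hG]
            calc μ P / P.len + ∑ P'' ∈ TF.filter (fun P'' => P₂.le P''), μ P'' / P''.len
                = ∑ P'' ∈ insert P (TF.filter (fun P'' => P₂.le P'')), μ P'' / P''.len :=
                  (Finset.sum_insert (f := fun P'' => μ P'' / P''.len) hnotmem).symm
              _ ≤ ∑ P'' ∈ TF.filter (fun P'' => P.le P''), μ P'' / P''.len :=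
                  Finset.sum_le_sum_of_subset_of_nonneg hsub3 (fun P'' _ _ =>
                    div_nonneg (hμ P'') P''.len_pos.le)
          have h5 : μ P / P.len < w := by linarith
          have := (div_lt_iff₀ P.len_pos).1 h5
          linarith [_root_.mul_comm P.len w]
      refine Finset.mem_coe.2 (Finset.mem_filter.2 ⟨?_, Tile.le_trans hle₂ h₂Q, hPbin⟩)
      exact Finset.mem_filter.2 ⟨hPTF, hPlight⟩
    set TQ : Tree M := ⟨(↑EQF : Set (Tile M)), Q, Finset.mem_coe.2 hQmem,
      fun P hP => (Finset.mem_filter.1 (Finset.mem_coe.1 hP)).2.1⟩ with hTQ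
    have hmaxQ : maxSize μ TQ.tiles ≤ δ := by
      rw [maxSize]
      refine Real.sSup_le ?_ hδ.le
      rintro s hs
      rcases Set.mem_insert_iff.1 hs with rfl | ⟨T'', hsub'', hconv'', rfl⟩
      · exact hδ.le
      · have hsub3 : ∀ P ∈ T''.tiles, P ∈ lightF ∧ binOf P = binOf Q := by
          intro P hP
          have : P ∈ EQF := by exact_mod_cast hsub'' hP
          exact hEQsub P this
        have := hsizelem (binOf Q) T'' hsub3
        rw [treeSize, Tree.len, hfin]
        rw [div_le_iff₀ T''.top.len_pos]
        linarith
    have hloc' := hloc TQ hconvQ hmaxQ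
    rw [treeSize, Tree.len, hTQ] at hloc'
    simp only at hloc'
    rw [← Set.coe_toFinset (↑EQF : Set (Tile M)), finsum_mem_coe_finset,
      Finset.toFinset_coe] at hloc'
    have := (div_le_iff₀ Q.len_pos).1 hloc'
    linarith
  -- light part
  have hlight : ∑ P ∈ lightF, μ' P ≤ C₂ * ∑ Q ∈ TopsF, Q.len := by
    set φ : Tile M → Tile M := fun P =>
      if h : ∃ Q, Q ∈ TopsF ∧ P.le Q ∧ binOf Q = binOf P then h.choose else P with hφ
    have hmaps : ∀ P ∈ lightF, φ P ∈ TopsF := by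
      intro P hP
      obtain ⟨Q, hQ, h1, h2⟩ := hcover P hP
      have hex : ∃ Q, Q ∈ TopsF ∧ P.le Q ∧ binOf Q = binOf P := ⟨Q, hQ, h1, h2⟩
      simp only [hφ, dif_pos hex]
      exact hex.choose_spec.1
    rw [← Finset.sum_fiberwise_of_maps_to hmaps μ']
    rw [Finset.mul_sum]
    refine Finset.sum_le_sum fun Q hQ => ?_
    have hfibsub : lightF.filter (fun P => φ P = Q)
        ⊆ lightF.filter (fun P => P.le Q ∧ binOf P = binOf Q) := by
      intro P hP
      obtain ⟨hPl, hPφ⟩ := Finset.mem_filter.1 hP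
      obtain ⟨Q', hQ', h1, h2⟩ := hcover P hPl
      have hex : ∃ Q, Q ∈ TopsF ∧ P.le Q ∧ binOf Q = binOf P := ⟨Q', hQ', h1, h2⟩
      have hval : φ P = hex.choose := by simp only [hφ, dif_pos hex]
      obtain ⟨hc1, hc2, hc3⟩ := hex.choose_spec
      rw [hval] at hPφ
      rw [← hPφ]
      exact Finset.mem_filter.2 ⟨hPl, hc2, hc3.symm⟩
    calc ∑ P ∈ lightF.filter (fun P => φ P = Q), μ' P
        ≤ ∑ P ∈ lightF.filter (fun P => P.le Q ∧ binOf P = binOf Q), μ' P :=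
          Finset.sum_le_sum_of_subset_of_nonneg hfibsub (fun P _ _ => hμ' P)
      _ ≤ C₂ * Q.len := hEQ Q hQ
  -- heavy part
  have hheavy : ∑ P ∈ TF.filter (fun P => ¬(μ P ≤ w * P.len)), μ' P
      ≤ C₁ / w * (B * T.top.len) := by
    have h1 : ∀ P ∈ TF.filter (fun P => ¬(μ P ≤ w * P.len)), μ' P ≤ C₁ / w * μ P := by
      intro P hP
      have hheavyP : w * P.len < μ P := lt_of_not_ge (Finset.mem_filter.1 hP).2
      have hlen : P.len ≤ μ P / w := by
        rw [le_div_iff₀ hw0]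
        linarith [_root_.mul_comm P.len w]
      calc μ' P ≤ C₁ * P.len := hwk P
        _ ≤ C₁ * (μ P / w) := by gcongr
        _ = C₁ / w * μ P := by ring
    calc ∑ P ∈ TF.filter (fun P => ¬(μ P ≤ w * P.len)), μ' P
        ≤ ∑ P ∈ TF.filter (fun P => ¬(μ P ≤ w * P.len)), C₁ / w * μ P :=
          Finset.sum_le_sum h1
      _ = C₁ / w * ∑ P ∈ TF.filter (fun P => ¬(μ P ≤ w * P.len)), μ P := by
          rw [Finset.mul_sum]
      _ ≤ C₁ / w * ∑ P ∈ TF, μ P :=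
          mul_le_mul_of_nonneg_left (Finset.sum_le_sum_of_subset_of_nonneg
            (Finset.filter_subset _ _) (fun P _ _ => hμ P)) (div_nonneg hC₁ hw0.le)
      _ ≤ C₁ / w * (B * T.top.len) :=
          mul_le_mul_of_nonneg_left hTsum (div_nonneg hC₁ hw0.le)
  -- combine
  have htotal : ∑ P ∈ TF, μ' P ≤ ((1 + 2 * B / δ) * (C₁ + C₂)) * T.top.len := by
    have hsplit := Finset.sum_filter_add_sum_filter_not TF (fun P => μ P ≤ w * P.len) μ'
    have hBw : B / w = 2 * B / δ := by
      rw [hw, div_div_eq_mul_div]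
      ring
    have h2 : ∑ P ∈ lightF, μ' P ≤ C₂ * ((1 + B / w) * T.top.len) := by
      calc ∑ P ∈ lightF, μ' P ≤ C₂ * ∑ Q ∈ TopsF, Q.len := hlight
        _ ≤ C₂ * ((1 + B / w) * T.top.len) := by gcongr
    have hlen0 : (0:ℝ) ≤ T.top.len := T.top.len_pos.le
    have hBw0 : (0:ℝ) ≤ B / w := div_nonneg hB hw0.le
    have hfinal : C₂ * ((1 + B / w) * T.top.len) + C₁ / w * (B * T.top.len)
        ≤ ((1 + B / w) * (C₁ + C₂)) * T.top.len := by
      have hC1w : C₁ / w * B = C₁ * (B / w) := by ring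
      nlinarith
    rw [← hsplit, ← hBw]
    have := add_le_add h2 hheavy
    linarith
  rw [treeSize, Tree.len, hfin]
  rw [div_le_iff₀ T.top.len_pos]
  exact htotal

end Dyadic
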